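/- Let m1, m2 be natural numbers and let (A1, A2) be a bipartite assignment of the graph G₀ into K_{m1,m2} such that A1 ∩ A2 = {v1}. Then {|A1|, |A2|} = {3, 9}: one of the two sets is {v1, v2, v3} and the other is {v1} ∪ V_A ∪ V_B. In particular max(m1, m2) ≥ 9 and min(m1, m2) ≥ 3. -/

import Mathlib

/-- A minor model of `G` in `H`: a family of pairwise disjoint nonempty branch sets,
each inducing a connected subgraph of `H`, with an edge of `H` joining the branch sets
of any two adjacent vertices of `G`. -/
structure MinorModel {V W : Type*} (G : SimpleGraph V) (H : SimpleGraph W) where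
  B : V → Set W
  nonempty : ∀ v, (B v).Nonempty
  pairwiseDisjoint : ∀ ⦃u v : V⦄, u ≠ v → Disjoint (B u) (B v)
  connected : ∀ v, (H.induce (B v)).Connected
  edge : ∀ ⦃u v : V⦄, G.Adj u v → ∃ x ∈ B u, ∃ y ∈ B v, H.Adj x y

/-- `G` is a minor of `H`. -/
def SimpleGraph.IsMinorOf {V W : Type*} (G : SimpleGraph V) (H : SimpleGraph W) : Prop :=
  Nonempty (MinorModel G H)

/-- A bipartite assignment of `G` into the complete bipartite graph `K_{m1,m2}`. -/
def SimpleGraph.BipartiteAssignment {V : Type*} (G : SimpleGraph V) (m1 m2 : ℕ)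
    (A1 A2 : Set V) : Prop :=
  A1 ∪ A2 = Set.univ ∧ A1.ncard ≤ m1 ∧ A2.ncard ≤ m2 ∧
    ∀ ⦃u v : V⦄, G.Adj u v → (u ∈ A1 ∧ v ∈ A2) ∨ (u ∈ A2 ∧ v ∈ A1)

/-- `G − S` is bipartite, i.e. `S` is an odd cycle transversal of `G`. -/
def SimpleGraph.DelBipartite {V : Type*} (G : SimpleGraph V) (S : Set V) : Prop :=
  ∃ X Y : Set V, Disjoint X Y ∧ X ∪ Y = Sᶜ ∧
    ∀ ⦃u v : V⦄, G.Adj u v → u ∉ S → v ∉ S → (u ∈ X ∧ v ∈ Y) ∨ (u ∈ Y ∧ v ∈ X)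

/-- The vertex set of the example graph `G₀`. -/
inductive V0 : Type
  | v1 | v2 | v3 | a1 | a2 | a3 | a4 | b1 | b2 | b3 | b4
deriving DecidableEq

instance instFintypeV0 : Fintype V0 :=
  ⟨{V0.v1, V0.v2, V0.v3, V0.a1, V0.a2, V0.a3, V0.a4, V0.b1, V0.b2, V0.b3, V0.b4},
    by intro x; cases x <;> decide⟩

/-- The set `V_A = {a1, a2, a3, a4}`. -/
def VA : Set V0 := {V0.a1, V0.a2, V0.a3, V0.a4}

/-- The set `V_B = {b1, b2, b3, b4}`. -/
def VB : Set V0 := {V0.b1, V0.b2, V0.b3, V0.b4}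

/-- The example graph `G₀`: edges are `{v1,v2}`, `{v1,a}` and `{v2,a}` and `{v3,a}` for
all `a ∈ V_A`, and `{v3,b}` for all `b ∈ V_B`. -/
def G0 : SimpleGraph V0 :=
  SimpleGraph.fromRel fun x y =>
    (x = V0.v1 ∧ y = V0.v2) ∨ (x = V0.v1 ∧ y ∈ VA) ∨ (x = V0.v2 ∧ y ∈ VA) ∨
      (x = V0.v3 ∧ y ∈ VA) ∨ (x = V0.v3 ∧ y ∈ VB)

lemma aux (A1 A2 : Set V0) (hcov : A1 ∪ A2 = Set.univ) (hint : A1 ∩ A2 = {V0.v1})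
    (hedge : ∀ ⦃u v : V0⦄, G0.Adj u v → (u ∈ A1 ∧ v ∈ A2) ∨ (u ∈ A2 ∧ v ∈ A1))
    (hv2 : V0.v2 ∈ A2) : A1 = {V0.v1} ∪ VA ∪ VB ∧ A2 = {V0.v1, V0.v2, V0.v3} := by
  have hmem : ∀ x, x ∈ A1 ∨ x ∈ A2 := fun x => by
    have := Set.mem_univ x; rw [← hcov] at this; exact this
  have hnot : ∀ x, x ≠ V0.v1 → x ∈ A1 → x ∉ A2 := by
    intro x hx h1 h2
    exact hx (by have : x ∈ A1 ∩ A2 := ⟨h1, h2⟩; rwa [hint] at this)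
  have hnot' : ∀ x, x ≠ V0.v1 → x ∈ A2 → x ∉ A1 := fun x hx h2 h1 => hnot x hx h1 h2
  have hv2' : V0.v2 ∉ A1 := hnot' _ (by simp) hv2
  have adjA : ∀ a ∈ VA, G0.Adj V0.v2 a := by
    intro a ha
    simp only [VA, Set.mem_insert_iff, Set.mem_singleton_iff] at ha
    rcases ha with rfl|rfl|rfl|rfl <;> simp [G0, VA, VB]
  have haA1 : ∀ a ∈ VA, a ∈ A1 := by
    intro a ha
    rcases hedge (adjA a ha) with ⟨h, _⟩ | ⟨_, h⟩
    · exact absurd h hv2'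
    · exact h
  have haA2 : ∀ a ∈ VA, a ∉ A2 := by
    intro a ha
    refine hnot a ?_ (haA1 a ha)
    simp only [VA, Set.mem_insert_iff, Set.mem_singleton_iff] at ha
    rcases ha with rfl|rfl|rfl|rfl <;> simp
  have adj3a1 : G0.Adj V0.v3 V0.a1 := by simp [G0, VA, VB]
  have hv3 : V0.v3 ∈ A2 := by
    rcases hedge adj3a1 with ⟨_, h⟩ | ⟨h, _⟩
    · exact absurd h (haA2 V0.a1 (by simp [VA]))
    · exact h
  have hv3' : V0.v3 ∉ A1 := hnot' _ (by simp) hv3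
  have adjB : ∀ b ∈ VB, G0.Adj V0.v3 b := by
    intro b hb
    simp only [VB, Set.mem_insert_iff, Set.mem_singleton_iff] at hb
    rcases hb with rfl|rfl|rfl|rfl <;> simp [G0, VA, VB]
  have hbA1 : ∀ b ∈ VB, b ∈ A1 := by
    intro b hb
    rcases hedge (adjB b hb) with ⟨h, _⟩ | ⟨_, h⟩
    · exact absurd h hv3'
    · exact h
  have hbA2 : ∀ b ∈ VB, b ∉ A2 := by
    intro b hb
    refine hnot b ?_ (hbA1 b hb)
    simp only [VB, Set.mem_insert_iff, Set.mem_singleton_iff] at hb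
    rcases hb with rfl|rfl|rfl|rfl <;> simp
  have hv1 : V0.v1 ∈ A1 ∧ V0.v1 ∈ A2 := by
    have : V0.v1 ∈ A1 ∩ A2 := by rw [hint]; rfl
    exact this
  have ha1 : V0.a1 ∈ A1 := haA1 V0.a1 (by simp [VA])
  have ha1' : V0.a1 ∉ A2 := haA2 V0.a1 (by simp [VA])
  have ha2 : V0.a2 ∈ A1 := haA1 V0.a2 (by simp [VA])
  have ha2' : V0.a2 ∉ A2 := haA2 V0.a2 (by simp [VA])
  have ha3 : V0.a3 ∈ A1 := haA1 V0.a3 (by simp [VA])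
  have ha3' : V0.a3 ∉ A2 := haA2 V0.a3 (by simp [VA])
  have ha4 : V0.a4 ∈ A1 := haA1 V0.a4 (by simp [VA])
  have ha4' : V0.a4 ∉ A2 := haA2 V0.a4 (by simp [VA])
  have hb1 : V0.b1 ∈ A1 := hbA1 V0.b1 (by simp [VB])
  have hb1' : V0.b1 ∉ A2 := hbA2 V0.b1 (by simp [VB])
  have hb2 : V0.b2 ∈ A1 := hbA1 V0.b2 (by simp [VB])
  have hb2' : V0.b2 ∉ A2 := hbA2 V0.b2 (by simp [VB])
  have hb3 : V0.b3 ∈ A1 := hbA1 V0.b3 (by simp [VB])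
  have hb3' : V0.b3 ∉ A2 := hbA2 V0.b3 (by simp [VB])
  have hb4 : V0.b4 ∈ A1 := hbA1 V0.b4 (by simp [VB])
  have hb4' : V0.b4 ∉ A2 := hbA2 V0.b4 (by simp [VB])
  constructor
  · ext x
    cases x <;> simp only [VA, VB, Set.mem_union, Set.mem_insert_iff, Set.mem_singleton_iff,
      reduceCtorEq, or_self, or_false, false_or, or_true, true_or, iff_true, iff_false] <;>
      first
        | exact hv1.1
        | exact ha1 | exact ha2 | exact ha3 | exact ha4
        | exact hb1 | exact hb2 | exact hb3 | exact hb4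
        | exact hv2'
        | exact hv3'
  · ext x
    cases x <;> simp only [Set.mem_insert_iff, Set.mem_singleton_iff,
      reduceCtorEq, or_self, or_false, false_or, or_true, true_or, iff_true, iff_false] <;>
      first
        | exact hv1.2
        | exact hv2
        | exact hv3
        | exact ha1' | exact ha2' | exact ha3' | exact ha4'
        | exact hb1' | exact hb2' | exact hb3' | exact hb4'

lemma card_small : ({V0.v1, V0.v2, V0.v3} : Set V0).ncard = 3 := by
  rw [show ({V0.v1, V0.v2, V0.v3} : Set V0) = ↑({V0.v1, V0.v2, V0.v3} : Finset V0) by simp]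
  rw [Set.ncard_coe_finset]; decide

lemma card_big : (({V0.v1} ∪ VA ∪ VB : Set V0)).ncard = 9 := by
  rw [show ({V0.v1} ∪ VA ∪ VB : Set V0) =
      ↑({V0.v1, V0.a1, V0.a2, V0.a3, V0.a4, V0.b1, V0.b2, V0.b3, V0.b4} : Finset V0) by
    simp [VA, VB]; ext x; simp; tauto]
  rw [Set.ncard_coe_finset]; decide

/-- If `(A1, A2)` is a bipartite assignment of `G₀` into `K_{m1,m2}` with
`A1 ∩ A2 = {v1}`, then one of the two sets is `{v1, v2, v3}` (of size 3) and the other is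
`{v1} ∪ V_A ∪ V_B` (of size 9); in particular `max m1 m2 ≥ 9` and `min m1 m2 ≥ 3`. -/
theorem stmt8 (m1 m2 : ℕ) (A1 A2 : Set V0)
    (h : G0.BipartiteAssignment m1 m2 A1 A2) (hint : A1 ∩ A2 = {V0.v1}) :
    ((A1 = {V0.v1, V0.v2, V0.v3} ∧ A2 = {V0.v1} ∪ VA ∪ VB) ∨
      (A1 = {V0.v1} ∪ VA ∪ VB ∧ A2 = {V0.v1, V0.v2, V0.v3})) ∧
    9 ≤ max m1 m2 ∧ 3 ≤ min m1 m2 := by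
  obtain ⟨hcov, hc1, hc2, hedge⟩ := h
  have hv2m : V0.v2 ∈ A1 ∪ A2 := by rw [hcov]; trivial
  rcases hv2m with hv2 | hv2
  · -- v2 ∈ A1 : swap roles
    have key := aux A2 A1 (by rw [Set.union_comm]; exact hcov)
      (by rw [Set.inter_comm]; exact hint)
      (fun u v huv => (hedge huv).symm) hv2
    refine ⟨Or.inl ⟨key.2, key.1⟩, ?_, ?_⟩
    · have : 9 ≤ m2 := by rw [key.1, card_big] at hc2; exact hc2
      omega
    · have h3 : 3 ≤ m1 := by rw [key.2, card_small] at hc1; exact hc1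
      have : 9 ≤ m2 := by rw [key.1, card_big] at hc2; exact hc2
      omega
  · have key := aux A1 A2 hcov hint hedge hv2
    refine ⟨Or.inr key, ?_, ?_⟩
    · have : 9 ≤ m1 := by rw [key.1, card_big] at hc1; exact hc1
      omega
    · have h3 : 3 ≤ m2 := by rw [key.2, card_small] at hc2; exact hc2
      have : 9 ≤ m1 := by rw [key.1, card_big] at hc1; exact hc1
      omega
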